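/- Let F = 𝔽₂ and T⁺ = F[U, U^{−1}]/(U·F[U]) as an F[U]-module. Consider the F[U]-module C = T⁺·a ⊕ T⁺·b₁ ⊕ T⁺·b₂ ⊕ T⁺·b₃ ⊕ T⁺·b₄ ⊕ T⁺·c₁ ⊕ T⁺·c₂ with the F[U]-linear map d determined by d(a) = U·b₂ + U·b₃, d(b₁) = U·c₁, d(b₂) = U·c₁ + U·c₂, d(b₃) = U·c₁ + U·c₂, d(b₄) = U·c₂, d(c₁) = d(c₂) = 0. Then d ∘ d = 0, and the homology ker(d)/im(d) is isomorphic as an F[U]-module to T⁺ ⊕ F³, where F³ carries the trivial U-action. -/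

import Mathlib

open Polynomial

section aux
variable (T : Type*) [AddCommGroup T]
    [Module (ZMod 2) T] [Module (Polynomial (ZMod 2)) T]
    [IsScalarTower (ZMod 2) (Polynomial (ZMod 2)) T]
    (b : Module.Basis ℕ (ZMod 2) T)

set_option linter.unusedSectionVars false

/-- multiplication by `X` as a `ZMod 2`-linear map -/
noncomputable def mulX : T →ₗ[ZMod 2] T where
  toFun t := (X : Polynomial (ZMod 2)) • t
  map_add' := smul_add _
  map_smul' _ _ := smul_comm _ _ _

/-- shift up along the basis -/
noncomputable def shiftS : T →ₗ[ZMod 2] T := b.constr ℕ (fun n => b (n + 1))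

theorem mulX_shiftS (hbs : ∀ n : ℕ, (X : Polynomial (ZMod 2)) • b (n + 1) = b n)
    (t : T) : (X : Polynomial (ZMod 2)) • (shiftS T b t) = t := by
  have : (mulX T).comp (shiftS T b) = LinearMap.id := by
    apply b.ext
    intro n
    simp [mulX, shiftS, Module.Basis.constr_basis, hbs n]
  have := congrArg (fun L => L t) this
  simpa [mulX] using this

theorem shiftS_mulX (hb0 : (X : Polynomial (ZMod 2)) • b 0 = 0)
    (hbs : ∀ n : ℕ, (X : Polynomial (ZMod 2)) • b (n + 1) = b n) (t : T) :
    shiftS T b ((X : Polynomial (ZMod 2)) • t) = t - (b.repr t 0) • b 0 := by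
  have : (shiftS T b).comp (mulX T) = LinearMap.id -
      ((LinearMap.toSpanSingleton (ZMod 2) T (b 0)).comp
        ((Finsupp.lapply 0).comp b.repr.toLinearMap)) := by
    apply b.ext
    intro n
    cases n with
    | zero =>
      simp [mulX, shiftS, hb0, LinearMap.toSpanSingleton, Module.Basis.repr_self]
    | succ n =>
      simp [mulX, shiftS, hbs n, Module.Basis.constr_basis, LinearMap.toSpanSingleton,
        Module.Basis.repr_self, Finsupp.single_eq_of_ne (Nat.succ_ne_zero n)]
  have := congrArg (fun L => L t) this
  simpa [mulX, LinearMap.toSpanSingleton] using this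

theorem kerX (hb0 : (X : Polynomial (ZMod 2)) • b 0 = 0)
    (hbs : ∀ n : ℕ, (X : Polynomial (ZMod 2)) • b (n + 1) = b n) (t : T)
    (h : (X : Polynomial (ZMod 2)) • t = 0) :
    t = (b.repr t 0) • b 0 := by
  have h2 := shiftS_mulX T b hb0 hbs t
  rw [h, map_zero] at h2
  have := h2.symm
  rwa [sub_eq_zero] at this

/-- the canonical representative of a homology class -/
noncomputable def repC (p : T × (Fin 3 → ZMod 2)) : Fin 7 → T :=
  ![p.2 0 • b 0, p.1 + p.2 1 • b 0, p.1, 0, p.1 + p.2 2 • b 0, 0, 0]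

theorem repC_0 (p : T × (Fin 3 → ZMod 2)) : repC T b p 0 = p.2 0 • b 0 := rfl
theorem repC_1 (p : T × (Fin 3 → ZMod 2)) : repC T b p 1 = p.1 + p.2 1 • b 0 := rfl
theorem repC_2 (p : T × (Fin 3 → ZMod 2)) : repC T b p 2 = p.1 := rfl
theorem repC_3 (p : T × (Fin 3 → ZMod 2)) : repC T b p 3 = 0 := rfl
theorem repC_4 (p : T × (Fin 3 → ZMod 2)) : repC T b p 4 = p.1 + p.2 2 • b 0 := rfl
theorem repC_5 (p : T × (Fin 3 → ZMod 2)) : repC T b p 5 = 0 := rfl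
theorem repC_6 (p : T × (Fin 3 → ZMod 2)) : repC T b p 6 = 0 := rfl

theorem repC_zero : repC T b 0 = 0 := by
  funext j
  fin_cases j
  · show (0 : ZMod 2) • b 0 = 0
    exact zero_smul _ _
  · show (0 : T) + (0 : ZMod 2) • b 0 = 0
    rw [zero_smul, add_zero]
  · rfl
  · rfl
  · show (0 : T) + (0 : ZMod 2) • b 0 = 0
    rw [zero_smul, add_zero]
  · rfl
  · rfl

theorem repC_add (p q : T × (Fin 3 → ZMod 2)) :
    repC T b (p + q) = repC T b p + repC T b q := by
  funext j
  fin_cases j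
  · show (p.2 0 + q.2 0) • b 0 = p.2 0 • b 0 + q.2 0 • b 0
    exact add_smul _ _ _
  · show (p.1 + q.1) + (p.2 1 + q.2 1) • b 0
      = (p.1 + p.2 1 • b 0) + (q.1 + q.2 1 • b 0)
    rw [add_smul]; abel
  · rfl
  · show (0 : T) = 0 + 0
    rw [add_zero]
  · show (p.1 + q.1) + (p.2 2 + q.2 2) • b 0
      = (p.1 + p.2 2 • b 0) + (q.1 + q.2 2 • b 0)
    rw [add_smul]; abel
  · show (0 : T) = 0 + 0
    rw [add_zero]
  · show (0 : T) = 0 + 0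
    rw [add_zero]

theorem repC_smulX (p : T × (Fin 3 → ZMod 2))
    (hb0 : (X : Polynomial (ZMod 2)) • b 0 = 0) :
    (X : Polynomial (ZMod 2)) • repC T b p
      = repC T b ((X : Polynomial (ZMod 2)) • p.1, 0) := by
  have hXc : ∀ c : ZMod 2, (X : Polynomial (ZMod 2)) • (c • b 0) = 0 := fun c => by
    rw [smul_comm, hb0, smul_zero]
  funext j
  fin_cases j
  · show (X : Polynomial (ZMod 2)) • (p.2 0 • b 0) = (0 : ZMod 2) • b 0
    rw [hXc, zero_smul]
  · show (X : Polynomial (ZMod 2)) • (p.1 + p.2 1 • b 0)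
      = (X : Polynomial (ZMod 2)) • p.1 + (0 : ZMod 2) • b 0
    rw [smul_add, hXc, zero_smul]
  · rfl
  · show (X : Polynomial (ZMod 2)) • (0 : T) = 0
    exact smul_zero _
  · show (X : Polynomial (ZMod 2)) • (p.1 + p.2 2 • b 0)
      = (X : Polynomial (ZMod 2)) • p.1 + (0 : ZMod 2) • b 0
    rw [smul_add, hXc, zero_smul]
  · show (X : Polynomial (ZMod 2)) • (0 : T) = 0
    exact smul_zero _
  · show (X : Polynomial (ZMod 2)) • (0 : T) = 0
    exact smul_zero _

end aux

/-- Let `F = 𝔽₂` and let `T⁺` be an `F[U]`-module with `F`-basis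
`{u_n : n ≥ 0}` satisfying `U·u_{n+1} = u_n`, `U·u_0 = 0` (the standard tower).
Let `C = T⁺·a ⊕ T⁺·b₁ ⊕ T⁺·b₂ ⊕ T⁺·b₃ ⊕ T⁺·b₄ ⊕ T⁺·c₁ ⊕ T⁺·c₂`
(coordinates `0,…,6`) with the `F[U]`-linear differential `d` determined by
`d(a) = U·b₂ + U·b₃`, `d(b₁) = U·c₁`, `d(b₂) = U·c₁ + U·c₂`,
`d(b₃) = U·c₁ + U·c₂`, `d(b₄) = U·c₂`, `d(c₁) = d(c₂) = 0`. Then `d ∘ d = 0`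
and the homology `ker d / im d` is isomorphic as an `F[U]`-module to
`T⁺ ⊕ F³` with trivial `U`-action on `F³` (expressed as an additive
isomorphism intertwining the `U`-actions; over `𝔽₂` additive maps are
automatically `F`-linear). -/
theorem stmt_16 (T : Type*) [AddCommGroup T]
    [Module (ZMod 2) T] [Module (Polynomial (ZMod 2)) T]
    [IsScalarTower (ZMod 2) (Polynomial (ZMod 2)) T]
    (b : Module.Basis ℕ (ZMod 2) T)
    (hb0 : (X : Polynomial (ZMod 2)) • b 0 = 0)
    (hbs : ∀ n : ℕ, (X : Polynomial (ZMod 2)) • b (n + 1) = b n)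
    (d : (Fin 7 → T) →ₗ[Polynomial (ZMod 2)] (Fin 7 → T))
    (hd : ∀ f : Fin 7 → T, d f = fun j =>
      if j = 2 then (X : Polynomial (ZMod 2)) • f 0
      else if j = 3 then (X : Polynomial (ZMod 2)) • f 0
      else if j = 5 then (X : Polynomial (ZMod 2)) • (f 1 + f 2 + f 3)
      else if j = 6 then (X : Polynomial (ZMod 2)) • (f 2 + f 3 + f 4)
      else 0) :
    (d ∘ₗ d = 0) ∧
    ∃ e : (LinearMap.ker d ⧸
        Submodule.comap (LinearMap.ker d).subtype (LinearMap.range d))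
        ≃+ T × (Fin 3 → ZMod 2),
      ∀ h, e ((X : Polynomial (ZMod 2)) • h)
        = ((X : Polynomial (ZMod 2)) • (e h).1, 0) := by
  have hchar : ∀ t : T, t + t = 0 := by
    intro t
    have h2 : ((2 : ZMod 2)) • t = t + t := two_smul _ t
    rw [show ((2 : ZMod 2)) = 0 by decide, zero_smul] at h2
    exact h2.symm
  have hneg : ∀ t : T, -t = t := fun t => neg_eq_of_add_eq_zero_left (hchar t)
  have hXc : ∀ c : ZMod 2, (X : Polynomial (ZMod 2)) • (c • b 0) = 0 := fun c => by
    rw [smul_comm, hb0, smul_zero]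
  have hc0 : ∀ c : ZMod 2, c • b 0 = 0 → c = 0 := by
    intro c hc
    have := congrArg (fun t => b.repr t 0) hc
    simpa [Module.Basis.repr_self] using this
  -- first part
  have hdd : d ∘ₗ d = 0 := by
    apply LinearMap.ext
    intro f
    show d (d f) = 0
    have h0 : (d f) 0 = 0 := by rw [hd f]; rfl
    have h1 : (d f) 1 = 0 := by rw [hd f]; rfl
    have h2 : (d f) 2 = (X : Polynomial (ZMod 2)) • f 0 := by rw [hd f]; rfl
    have h3 : (d f) 3 = (X : Polynomial (ZMod 2)) • f 0 := by rw [hd f]; rfl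
    have h4 : (d f) 4 = 0 := by rw [hd f]; rfl
    rw [hd (d f)]
    funext j
    fin_cases j
    · rfl
    · rfl
    · show (X : Polynomial (ZMod 2)) • (d f) 0 = 0
      rw [h0, smul_zero]
    · show (X : Polynomial (ZMod 2)) • (d f) 0 = 0
      rw [h0, smul_zero]
    · rfl
    · show (X : Polynomial (ZMod 2)) • ((d f) 1 + (d f) 2 + (d f) 3) = 0
      rw [h1, h2, h3, zero_add, hchar, smul_zero]
    · show (X : Polynomial (ZMod 2)) • ((d f) 2 + (d f) 3 + (d f) 4) = 0
      rw [h2, h3, h4, add_zero, hchar, smul_zero]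
  refine ⟨hdd, ?_⟩
  -- kernel characterization
  have hk : ∀ f : Fin 7 → T, f ∈ LinearMap.ker d ↔
      ((X : Polynomial (ZMod 2)) • f 0 = 0 ∧
       (X : Polynomial (ZMod 2)) • (f 1 + f 2 + f 3) = 0 ∧
       (X : Polynomial (ZMod 2)) • (f 2 + f 3 + f 4) = 0) := by
    intro f
    rw [LinearMap.mem_ker, hd f]
    constructor
    · intro h
      exact ⟨congrFun h 2, congrFun h 5, congrFun h 6⟩
    · rintro ⟨h1, h2, h3⟩
      funext j
      fin_cases j
      exacts [rfl, rfl, h1, h1, rfl, h2, h3]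
  -- range sufficiency
  have hr : ∀ g : Fin 7 → T, g 0 = 0 → g 1 = 0 → g 4 = 0 → g 2 = g 3 →
      g ∈ LinearMap.range d := by
    intro g h0 h1 h4 h23
    refine ⟨![shiftS T b (g 2), shiftS T b (g 5), 0, 0, shiftS T b (g 6), 0, 0], ?_⟩
    rw [hd]
    funext j
    fin_cases j
    · exact h0.symm
    · exact h1.symm
    · show (X : Polynomial (ZMod 2)) • shiftS T b (g 2) = g 2
      exact mulX_shiftS T b hbs _
    · show (X : Polynomial (ZMod 2)) • shiftS T b (g 2) = g 3
      rw [mulX_shiftS T b hbs, h23]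
    · exact h4.symm
    · show (X : Polynomial (ZMod 2)) • (shiftS T b (g 5) + 0 + 0) = g 5
      rw [add_zero, add_zero, mulX_shiftS T b hbs]
    · show (X : Polynomial (ZMod 2)) • ((0 : T) + 0 + shiftS T b (g 6)) = g 6
      rw [zero_add, zero_add, mulX_shiftS T b hbs]
  -- canonical representatives are cycles
  have hrepk : ∀ p : T × (Fin 3 → ZMod 2), repC T b p ∈ LinearMap.ker d := by
    intro p
    rw [hk]
    refine ⟨?_, ?_, ?_⟩
    · rw [repC_0]; exact hXc _
    · rw [repC_1, repC_2, repC_3]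
      have h : p.1 + p.2 1 • b 0 + p.1 + 0 = p.2 1 • b 0 + (p.1 + p.1) := by abel
      rw [h, hchar, add_zero, hXc]
    · rw [repC_2, repC_3, repC_4]
      have h : p.1 + 0 + (p.1 + p.2 2 • b 0) = p.2 2 • b 0 + (p.1 + p.1) := by abel
      rw [h, hchar, add_zero, hXc]
  set N := Submodule.comap (LinearMap.ker d).subtype (LinearMap.range d) with hN
  let ψ : T × (Fin 3 → ZMod 2) →+ (LinearMap.ker d ⧸ N) :=
    { toFun := fun p => Submodule.Quotient.mk ⟨repC T b p, hrepk p⟩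
      map_zero' := by
        show Submodule.Quotient.mk (p := N)
          (⟨repC T b 0, hrepk 0⟩ : LinearMap.ker d) = 0
        rw [show (⟨repC T b 0, hrepk 0⟩ : LinearMap.ker d) = 0 from
          Subtype.ext (repC_zero T b), Submodule.Quotient.mk_zero]
      map_add' := by
        intro p q
        show Submodule.Quotient.mk (p := N)
            (⟨repC T b (p + q), hrepk (p + q)⟩ : LinearMap.ker d)
          = Submodule.Quotient.mk (p := N) (⟨repC T b p, hrepk p⟩ : LinearMap.ker d)
            + Submodule.Quotient.mk (p := N) (⟨repC T b q, hrepk q⟩ : LinearMap.ker d)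
        rw [show (⟨repC T b (p + q), hrepk (p + q)⟩ : LinearMap.ker d)
          = ⟨repC T b p, hrepk p⟩ + ⟨repC T b q, hrepk q⟩ from
          Subtype.ext (repC_add T b p q), Submodule.Quotient.mk_add] }
  have hinj : Function.Injective ψ := by
    rw [injective_iff_map_eq_zero]
    intro p hp
    have hmem : repC T b p ∈ LinearMap.range d := by
      have h := (Submodule.Quotient.mk_eq_zero N).mp hp
      rwa [hN, Submodule.mem_comap] at h
    obtain ⟨f', hf'⟩ := hmem
    rw [hd f'] at hf'
    have e0 : p.2 0 • b 0 = 0 := by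
      have h := (congrFun hf' 0).symm
      rw [repC_0] at h
      exact h
    have e1 : p.1 + p.2 1 • b 0 = 0 := by
      have h := (congrFun hf' 1).symm
      rw [repC_1] at h
      exact h
    have et : p.1 = 0 := by
      have a2 : (X : Polynomial (ZMod 2)) • f' 0 = p.1 := by
        have h := congrFun hf' 2
        rw [repC_2] at h
        exact h
      have a3 : (X : Polynomial (ZMod 2)) • f' 0 = 0 := by
        have h := congrFun hf' 3
        rw [repC_3] at h
        exact h
      exact a2.symm.trans a3
    have e4 : p.1 + p.2 2 • b 0 = 0 := by
      have h := (congrFun hf' 4).symm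
      rw [repC_4] at h
      exact h
    rw [et, zero_add] at e1 e4
    have hsnd : p.2 = 0 := by
      funext i
      fin_cases i
      exacts [hc0 _ e0, hc0 _ e1, hc0 _ e4]
    rw [Prod.ext_iff]
    exact ⟨et, hsnd⟩
  have hsurj : Function.Surjective ψ := by
    intro q
    obtain ⟨⟨f, hf⟩, rfl⟩ := Submodule.Quotient.mk_surjective N q
    obtain ⟨k0, k1, k2⟩ := (hk f).mp hf
    have c0 := kerX T b hb0 hbs _ k0
    have c1 := kerX T b hb0 hbs _ k1
    have c2 := kerX T b hb0 hbs _ k2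
    refine ⟨(f 2 + f 3,
      ![b.repr (f 0) 0, b.repr (f 1 + f 2 + f 3) 0, b.repr (f 2 + f 3 + f 4) 0]), ?_⟩
    set p : T × (Fin 3 → ZMod 2) := (f 2 + f 3,
      ![b.repr (f 0) 0, b.repr (f 1 + f 2 + f 3) 0, b.repr (f 2 + f 3 + f 4) 0]) with hpdef
    show Submodule.Quotient.mk (p := N) (⟨repC T b p, hrepk p⟩ : LinearMap.ker d)
      = Submodule.Quotient.mk (p := N) (⟨f, hf⟩ : LinearMap.ker d)
    rw [Submodule.Quotient.eq, hN, Submodule.mem_comap]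
    have hco : ∀ j, ((LinearMap.ker d).subtype
        ((⟨repC T b p, hrepk p⟩ : LinearMap.ker d) - ⟨f, hf⟩)) j
        = repC T b p j - f j := fun _ => rfl
    apply hr
    · rw [hco 0, repC_0]
      show b.repr (f 0) 0 • b 0 - f 0 = 0
      rw [← c0, sub_self]
    · rw [hco 1, repC_1]
      show f 2 + f 3 + b.repr (f 1 + f 2 + f 3) 0 • b 0 - f 1 = 0
      rw [← c1]
      have h : f 2 + f 3 + (f 1 + f 2 + f 3) - f 1 = (f 2 + f 2) + (f 3 + f 3) := by abel
      rw [h, hchar, hchar, add_zero]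
    · rw [hco 4, repC_4]
      show f 2 + f 3 + b.repr (f 2 + f 3 + f 4) 0 • b 0 - f 4 = 0
      rw [← c2]
      have h : f 2 + f 3 + (f 2 + f 3 + f 4) - f 4 = (f 2 + f 2) + (f 3 + f 3) := by abel
      rw [h, hchar, hchar, add_zero]
    · rw [hco 2, hco 3, repC_2, repC_3]
      have h : f 2 + f 3 - f 2 = f 3 := by abel
      rw [h, zero_sub, hneg]
  let E := AddEquiv.ofBijective ψ ⟨hinj, hsurj⟩
  refine ⟨E.symm, ?_⟩
  intro h
  have key : ∀ p : T × (Fin 3 → ZMod 2),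
      (X : Polynomial (ZMod 2)) • (ψ p) = ψ ((X : Polynomial (ZMod 2)) • p.1, 0) := by
    intro p
    show (X : Polynomial (ZMod 2)) • Submodule.Quotient.mk (p := N)
        (⟨repC T b p, hrepk p⟩ : LinearMap.ker d)
      = Submodule.Quotient.mk (p := N)
        ((⟨repC T b ((X : Polynomial (ZMod 2)) • p.1, 0), hrepk _⟩ : LinearMap.ker d))
    rw [← Submodule.Quotient.mk_smul]
    congr 1
    apply Subtype.ext
    show (X : Polynomial (ZMod 2)) • repC T b p
      = repC T b ((X : Polynomial (ZMod 2)) • p.1, 0)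
    exact repC_smulX T b p hb0
  have hEψ : ∀ p, E p = ψ p := fun _ => rfl
  have step : (X : Polynomial (ZMod 2)) • h
      = E ((X : Polynomial (ZMod 2)) • (E.symm h).1, 0) := by
    conv_lhs => rw [← E.apply_symm_apply h]
    rw [hEψ, hEψ]
    exact key (E.symm h)
  rw [step, AddEquiv.symm_apply_apply]
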